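/- (Fundamental theorem, (c) ⇒ (d)): Fix 1 ≤ t ≤ t+k ≤ T. If F_{t−1,t+k} ∩ L^0_+(𝓕_{t+k}) = {0}, then F_{t−1,t+k} is closed with respect to convergence in probability: if ξ^n ∈ F_{t−1,t+k} and ξ^n → ζ in probability, then ζ ∈ F_{t−1,t+k}. -/

import Mathlib

open MeasureTheory Filter Finset
open scoped ENNReal NNReal

noncomputable section

namespace BidAskFTAP

variable {Ω : Type*}

/-- Componentwise positive part of a vector in `ℝ^d`. -/
def posPart {d : ℕ} (x : Fin d → ℝ) : Fin d → ℝ := fun i => max (x i) 0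

/-- Componentwise negative part of a vector in `ℝ^d`. -/
def negPart {d : ℕ} (x : Fin d → ℝ) : Fin d → ℝ := fun i => max (-(x i)) 0

/-- Inner product on `ℝ^d`. -/
def dotp {d : ℕ} (x y : Fin d → ℝ) : ℝ := ∑ i, x i * y i

section Market

variable [m : MeasurableSpace Ω] {d : ℕ}

/-- `F` is a filtration on `(Ω, m)` with horizon `T`: monotone, sub-σ-algebras of `m`,
and `F T = m` (i.e. `𝓕_T = 𝓕`). -/
def IsFiltration (F : ℕ → MeasurableSpace Ω) (T : ℕ) : Prop :=
  Monotone F ∧ (∀ t, F t ≤ m) ∧ F T = m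

/-- Adaptedness of an `ℝ^d`-valued process up to time `T`. -/
def AdaptedProc (F : ℕ → MeasurableSpace Ω) (T : ℕ) (S : ℕ → Ω → Fin d → ℝ) : Prop :=
  ∀ t ≤ T, Measurable[F t] (S t)

/-- Standing assumptions on the bid and ask price processes `S̲ = Sb`, `S̄ = Sa`:
adapted, strictly positive components, and `S̲ ≤ S̄` a.s. -/
def IsBidAsk (P : Measure Ω) (F : ℕ → MeasurableSpace Ω) (T : ℕ)
    (Sb Sa : ℕ → Ω → Fin d → ℝ) : Prop :=
  AdaptedProc F T Sb ∧ AdaptedProc F T Sa ∧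
  (∀ t ≤ T, ∀ i, ∀ᵐ ω ∂P, 0 < Sb t ω i) ∧
  (∀ t ≤ T, ∀ i, ∀ᵐ ω ∂P, 0 < Sa t ω i) ∧
  (∀ t ≤ T, ∀ i, ∀ᵐ ω ∂P, Sb t ω i ≤ Sa t ω i)

/-- A trading strategy on horizon `T`: predictable (`H t` is `𝓕_{t-1}`-measurable),
with the convention `H 0 = 0` (so that `ΔH 1 = H 1`). -/
def IsStrategy (F : ℕ → MeasurableSpace Ω) (T : ℕ) (H : ℕ → Ω → Fin d → ℝ) : Prop :=
  H 0 = 0 ∧ ∀ t, 1 ≤ t → t ≤ T → Measurable[F (t - 1)] (H t)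

/-- Membership in `𝒫_T^+`: componentwise nonnegative. -/
def NonnegStrategy (T : ℕ) (H : ℕ → Ω → Fin d → ℝ) : Prop :=
  ∀ t ≤ T, ∀ ω, ∀ i, 0 ≤ H t ω i

/-- Membership in `𝒫_T^-`: componentwise nonpositive. -/
def NonposStrategy (T : ℕ) (H : ℕ → Ω → Fin d → ℝ) : Prop :=
  ∀ t ≤ T, ∀ ω, ∀ i, H t ω i ≤ 0

/-- Uniformly bounded strategy. -/
def BoundedStrategy (T : ℕ) (H : ℕ → Ω → Fin d → ℝ) : Prop :=
  ∃ C : ℝ, ∀ t ≤ T, ∀ ω, ∀ i, |H t ω i| ≤ C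

/-- The immediate–liquidation value process
`x_T(H) = -∑_{j=1}^T (ΔH_j)⁺·S̄_{j-1} + ∑_{j=1}^T (ΔH_j)⁻·S̲_{j-1} + (H_T)⁺·S̲_T - (H_T)⁻·S̄_T`. -/
def xval (Sb Sa : ℕ → Ω → Fin d → ℝ) (T : ℕ) (H : ℕ → Ω → Fin d → ℝ) (ω : Ω) : ℝ :=
  (∑ j ∈ Icc 1 T, (dotp (negPart (H j ω - H (j - 1) ω)) (Sb (j - 1) ω)
    - dotp (posPart (H j ω - H (j - 1) ω)) (Sa (j - 1) ω)))
  + dotp (posPart (H T ω)) (Sb T ω) - dotp (negPart (H T ω)) (Sa T ω)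

/-- The gain `(H · S)_T = ∑_{j=1}^T H_j · (S_j - S_{j-1})`. -/
def gain (S : ℕ → Ω → Fin d → ℝ) (T : ℕ) (H : ℕ → Ω → Fin d → ℝ) (ω : Ω) : ℝ :=
  ∑ j ∈ Icc 1 T, dotp (H j ω) (S j ω - S (j - 1) ω)

/-- Membership (as elements of `L⁰`, i.e. up to a.s. equality) in
`𝒜_t = ℛ_t - L⁰₊(𝓕_t)`. -/
def memA (P : Measure Ω) (F : ℕ → MeasurableSpace Ω) (Sb Sa : ℕ → Ω → Fin d → ℝ)
    (t : ℕ) (f : Ω → ℝ) : Prop :=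
  ∃ H : ℕ → Ω → Fin d → ℝ, IsStrategy F t H ∧
    ∃ r : Ω → ℝ, Measurable[F t] r ∧ (∀ᵐ ω ∂P, 0 ≤ r ω) ∧
      f =ᵐ[P] fun ω => xval Sb Sa t H ω - r ω

/-- The no-arbitrage condition `𝒜_t ∩ L⁰₊(𝓕_t) = {0}` at horizon `t`. -/
def NA (P : Measure Ω) (F : ℕ → MeasurableSpace Ω) (Sb Sa : ℕ → Ω → Fin d → ℝ)
    (t : ℕ) : Prop :=
  ∀ f : Ω → ℝ, memA P F Sb Sa t f → (∀ᵐ ω ∂P, 0 ≤ f ω) → f =ᵐ[P] 0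

/-- Two measures are equivalent: mutually absolutely continuous. -/
def EquivMeasure (P Q : Measure Ω) : Prop := P ≪ Q ∧ Q ≪ P

/-- The Radon–Nikodym density `dQ/dP` belongs to `L^∞(P)`. -/
def BoundedDensity (P Q : Measure Ω) : Prop :=
  ∃ C : ℝ≥0, ∀ᵐ ω ∂P, Q.rnDeriv P ω ≤ (C : ℝ≥0∞)

/-- `Q` is an equivalent bid-ask martingale measure (EBAMM) for `(S̲, S̄)`:
`Q ∼ P`, all `S̄_t` are `Q`-integrable, and for all `1 ≤ t ≤ T` and coordinates `i`:
`S̲_{t-1}^i ≤ E_Q[S̄_t^i | 𝓕_{t-1}]` and `E_Q[S̲_t^i | 𝓕_{t-1}] ≤ S̄_{t-1}^i` a.s. -/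
def IsEBAMM (P : Measure Ω) (F : ℕ → MeasurableSpace Ω) (T : ℕ)
    (Sb Sa : ℕ → Ω → Fin d → ℝ) (Q : Measure Ω) : Prop :=
  IsProbabilityMeasure Q ∧ EquivMeasure P Q ∧
  (∀ t ≤ T, ∀ i, Integrable (fun ω => Sa t ω i) Q) ∧
  (∀ t, 1 ≤ t → t ≤ T → ∀ i,
    (∀ᵐ ω ∂P, Sb (t - 1) ω i ≤ (Q[fun ω => Sa t ω i | F (t - 1)]) ω) ∧
    (∀ᵐ ω ∂P, (Q[fun ω => Sb t ω i | F (t - 1)]) ω ≤ Sa (t - 1) ω i))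

/-- `(S̃, Q)` is a consistent price system: `Q ∼ P`, `S̃` adapted, evolving between bid and
ask prices, and a `Q`-martingale. -/
def IsCPS (P : Measure Ω) (F : ℕ → MeasurableSpace Ω) (T : ℕ)
    (Sb Sa St : ℕ → Ω → Fin d → ℝ) (Q : Measure Ω) : Prop :=
  IsProbabilityMeasure Q ∧ EquivMeasure P Q ∧ AdaptedProc F T St ∧
  (∀ t ≤ T, ∀ i, Integrable (fun ω => St t ω i) Q) ∧
  (∀ t ≤ T, ∀ i, ∀ᵐ ω ∂P, Sb t ω i ≤ St t ω i ∧ St t ω i ≤ Sa t ω i) ∧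
  (∀ t, 1 ≤ t → t ≤ T → ∀ i,
    Q[fun ω => St t ω i | F (t - 1)] =ᵐ[P] fun ω => St (t - 1) ω i)

/-- `(S̃, Q)` is a supermartingale consistent price system. -/
def IsSupCPS (P : Measure Ω) (F : ℕ → MeasurableSpace Ω) (T : ℕ)
    (Sb Sa St : ℕ → Ω → Fin d → ℝ) (Q : Measure Ω) : Prop :=
  IsProbabilityMeasure Q ∧ EquivMeasure P Q ∧ AdaptedProc F T St ∧
  (∀ t ≤ T, ∀ i, Integrable (fun ω => St t ω i) Q) ∧
  (∀ t ≤ T, ∀ i, ∀ᵐ ω ∂P, Sb t ω i ≤ St t ω i ∧ St t ω i ≤ Sa t ω i) ∧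
  (∀ t, 1 ≤ t → t ≤ T → ∀ i,
    (∀ᵐ ω ∂P, (Q[fun ω => St t ω i | F (t - 1)]) ω ≤ St (t - 1) ω i))

/-- `(S̃, Q)` is a submartingale consistent price system. -/
def IsSubCPS (P : Measure Ω) (F : ℕ → MeasurableSpace Ω) (T : ℕ)
    (Sb Sa St : ℕ → Ω → Fin d → ℝ) (Q : Measure Ω) : Prop :=
  IsProbabilityMeasure Q ∧ EquivMeasure P Q ∧ AdaptedProc F T St ∧
  (∀ t ≤ T, ∀ i, Integrable (fun ω => St t ω i) Q) ∧
  (∀ t ≤ T, ∀ i, ∀ᵐ ω ∂P, Sb t ω i ≤ St t ω i ∧ St t ω i ≤ Sa t ω i) ∧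
  (∀ t, 1 ≤ t → t ≤ T → ∀ i,
    (∀ᵐ ω ∂P, St (t - 1) ω i ≤ (Q[fun ω => St t ω i | F (t - 1)]) ω))

/-- Membership (up to a.s. equality) in
`F_{t-1,t+k} = ℛ_{t-1,t+k}⁺ + ℛ_{t-1,t+k}⁻ - L⁰₊(𝓕_{t+k})`:
`f = Hp·(S̲_{t+k} - S̄_{t-1}) - Hm·(S̄_{t+k} - S̲_{t-1}) - r` with `Hp, Hm ≥ 0`
`𝓕_{t-1}`-measurable and `r ∈ L⁰₊(𝓕_{t+k})`. -/
def memFtk (P : Measure Ω) (F : ℕ → MeasurableSpace Ω) (Sb Sa : ℕ → Ω → Fin d → ℝ)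
    (t k : ℕ) (f : Ω → ℝ) : Prop :=
  ∃ (Hp Hm : Ω → Fin d → ℝ) (r : Ω → ℝ),
    Measurable[F (t - 1)] Hp ∧ Measurable[F (t - 1)] Hm ∧
    (∀ ω i, 0 ≤ Hp ω i) ∧ (∀ ω i, 0 ≤ Hm ω i) ∧
    Measurable[F (t + k)] r ∧ (∀ᵐ ω ∂P, 0 ≤ r ω) ∧
    f =ᵐ[P] fun ω =>
      dotp (Hp ω) (Sb (t + k) ω - Sa (t - 1) ω)
        - dotp (Hm ω) (Sa (t + k) ω - Sb (t - 1) ω) - r ω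

/-- Membership (up to a.s. equality) in
`F_t = ∑_{j<t} ℛ_{j,t}⁺ + ∑_{j<t} ℛ_{j,t}⁻ - L⁰₊(𝓕_t)`. -/
def memFt (P : Measure Ω) (F : ℕ → MeasurableSpace Ω) (Sb Sa : ℕ → Ω → Fin d → ℝ)
    (t : ℕ) (f : Ω → ℝ) : Prop :=
  ∃ (Hp Hm : ℕ → Ω → Fin d → ℝ) (r : Ω → ℝ),
    (∀ j < t, Measurable[F j] (Hp j) ∧ Measurable[F j] (Hm j)) ∧
    (∀ j < t, ∀ ω i, 0 ≤ Hp j ω i ∧ 0 ≤ Hm j ω i) ∧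
    Measurable[F t] r ∧ (∀ᵐ ω ∂P, 0 ≤ r ω) ∧
    f =ᵐ[P] fun ω =>
      (∑ j ∈ range t,
        (dotp (Hp j ω) (Sb t ω - Sa j ω) - dotp (Hm j ω) (Sa t ω - Sb j ω))) - r ω

/-- `x_{s,u}(H) = -H⁺·S̄_s + H⁻·S̲_s + H⁺·S̲_u - H⁻·S̄_u` for an `𝓕_s`-measurable `H`. -/
def xval2 (Sb Sa : ℕ → Ω → Fin d → ℝ) (s u : ℕ) (H : Ω → Fin d → ℝ) (ω : Ω) : ℝ :=
  - dotp (posPart (H ω)) (Sa s ω) + dotp (negPart (H ω)) (Sb s ω)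
    + dotp (posPart (H ω)) (Sb u ω) - dotp (negPart (H ω)) (Sa u ω)

/-- Membership (up to a.s. equality) in `𝒜_{t-1,t+k} = ℛ_{t-1,t+k} - L⁰₊(𝓕_{t+k})` where
`ℛ_{t-1,t+k} = {x_{t-1,t+k}(H) : H ∈ L⁰(ℝ^d, 𝓕_{t-1})}`. -/
def memA2 (P : Measure Ω) (F : ℕ → MeasurableSpace Ω) (Sb Sa : ℕ → Ω → Fin d → ℝ)
    (t k : ℕ) (f : Ω → ℝ) : Prop :=
  ∃ (H : Ω → Fin d → ℝ) (r : Ω → ℝ),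
    Measurable[F (t - 1)] H ∧ Measurable[F (t + k)] r ∧ (∀ᵐ ω ∂P, 0 ≤ r ω) ∧
    f =ᵐ[P] fun ω => xval2 Sb Sa (t - 1) (t + k) H ω - r ω

end Market

section Helpers
open scoped Topology
variable [mΩ : MeasurableSpace Ω]

lemma measurable_pi_fun {d : ℕ} {f : Ω → Fin d → ℝ} (hf : ∀ i, Measurable fun ω => f ω i) :
    Measurable f := measurable_pi_lambda f hf

lemma measurable_comp_nat {β : Type*} [MeasurableSpace β] {u : ℕ → Ω → β}
    (hu : ∀ n, Measurable (u n)) {τ : Ω → ℕ} (hτ : Measurable τ) :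
    Measurable fun ω => u (τ ω) ω := by
  have h : Measurable fun p : Ω × ℕ => u p.2 p.1 :=
    measurable_from_prod_countable_left fun n => hu n
  exact h.comp (measurable_id.prodMk hτ)

lemma measurable_sInf_nat {p : ℕ → Ω → Prop} (hp : ∀ n, MeasurableSet {ω | p n ω}) :
    Measurable fun ω => sInf {n | p n ω} := by
  apply measurable_to_countable'
  intro n
  have : (fun ω => sInf {k | p k ω}) ⁻¹' {n} =
      ({ω | p n ω} ∩ ⋂ k < n, {ω | p k ω}ᶜ) ∪
        ({ω | (n : ℕ) = 0} ∩ ⋂ k, {ω | p k ω}ᶜ) := by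
    ext ω
    simp only [Set.mem_preimage, Set.mem_singleton_iff, Set.mem_union, Set.mem_inter_iff,
      Set.mem_iInter, Set.mem_compl_iff, Set.mem_setOf_eq]
    constructor
    · intro h
      by_cases hne : {k | p k ω}.Nonempty
      · left
        have hmem := Nat.sInf_mem hne
        rw [h] at hmem
        refine ⟨hmem, fun k hk hpk => ?_⟩
        have := Nat.sInf_le (s := {k | p k ω}) hpk
        rw [h] at this; omega
      · right
        rw [Set.not_nonempty_iff_eq_empty] at hne
        rw [hne, Nat.sInf_empty] at h
        exact ⟨h.symm, fun k hk => Set.eq_empty_iff_forall_notMem.1 hne k hk⟩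
    · rintro (⟨hn, hmin⟩ | ⟨h0, hall⟩)
      · refine le_antisymm (Nat.sInf_le hn) ?_
        by_contra hlt
        push_neg at hlt
        have hmem := Nat.sInf_mem (⟨n, hn⟩ : {k | p k ω}.Nonempty)
        exact hmin _ hlt hmem
      · have : {k | p k ω} = ∅ := Set.eq_empty_iff_forall_notMem.2 fun k hk => hall k hk
        rw [this, Nat.sInf_empty]; exact h0.symm
  rw [this]
  refine ((hp n).inter (MeasurableSet.iInter fun k => MeasurableSet.iInter fun _ =>
    (hp k).compl)).union (MeasurableSet.inter ?_ (MeasurableSet.iInter fun k => (hp k).compl))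
  by_cases h : (n : ℕ) = 0 <;> simp [h]

/-- Measurable selection of a limit for a.e.-pointwise-convergent measurable sequences. -/
lemma exists_measurable_limit {x : ℕ → Ω → ℝ} (hx : ∀ n, Measurable (x n)) :
    ∃ l : Ω → ℝ, Measurable l ∧ ∀ ω, (∃ c, Tendsto (fun n => x n ω) atTop (𝓝 c)) →
      Tendsto (fun n => x n ω) atTop (𝓝 (l ω)) := by
  set C := {ω | ∃ c, Tendsto (fun n => x n ω) atTop (𝓝 c)} with hC
  have hCmeas : MeasurableSet C := measurableSet_exists_tendsto hx
  set y : ℕ → Ω → ℝ := fun n => C.indicator (x n) with hy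
  have hym : ∀ n, Measurable (y n) := fun n => (hx n).indicator hCmeas
  have hconv : ∀ ω, ∃ c, Tendsto (fun n => y n ω) atTop (𝓝 c) := by
    intro ω
    by_cases h : ω ∈ C
    · have h' : ∃ c, Tendsto (fun n => x n ω) atTop (𝓝 c) := h
      obtain ⟨c, hc⟩ := h'
      exact ⟨c, hc.congr fun n => (Set.indicator_of_mem h (x n)).symm⟩
    · exact ⟨0, tendsto_const_nhds.congr fun n => (Set.indicator_of_notMem h (x n)).symm⟩
  refine ⟨fun ω => (hconv ω).choose, ?_, ?_⟩
  · exact measurable_of_tendsto_metrizable' atTop hym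
      (tendsto_pi_nhds.2 fun ω => (hconv ω).choose_spec)
  · intro ω hω
    exact ((hconv ω).choose_spec).congr fun n => Set.indicator_of_mem (show ω ∈ C from hω) (x n)

/-- Random subsequence extraction (scalar): along a measurably-chosen random reindexing
tending to infinity, a measurable sequence bounded on `A` converges on `A` to a
measurable limit. -/
lemma exists_random_subseq_real {y : ℕ → Ω → ℝ} (hy : ∀ n, Measurable (y n))
    {B : Ω → ℝ} (hB : Measurable B) (A : Set Ω) (hA : ∀ ω ∈ A, ∀ n, |y n ω| ≤ B ω) :
    ∃ σ : Ω → ℕ → ℕ, (∀ k, Measurable fun ω => σ ω k) ∧ (∀ ω k, k ≤ σ ω k) ∧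
      ∃ l : Ω → ℝ, Measurable l ∧ ∀ ω ∈ A, Tendsto (fun k => y (σ ω k) ω) atTop (𝓝 (l ω)) := by
  set b : Ω → ℝ := fun ω => limsup (fun n => y n ω) atTop with hb
  have hbm : Measurable b := Measurable.limsup hy
  set σ : Ω → ℕ → ℕ := fun ω k => max k (sInf {n | k ≤ n ∧ b ω - 1 / (k + 1) < y n ω}) with hσ
  have hσm : ∀ k, Measurable fun ω => σ ω k := by
    intro k
    exact measurable_const.max (measurable_sInf_nat fun n =>
      (MeasurableSet.const (k ≤ n)).inter (measurableSet_lt (hbm.sub measurable_const) (hy n)))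
  refine ⟨σ, hσm, fun ω k => le_max_left _ _, b, hbm, ?_⟩
  intro ω hω
  have hbdd : IsBoundedUnder (· ≤ ·) atTop fun n => y n ω :=
    isBoundedUnder_of ⟨B ω, fun n => (abs_le.1 (hA ω hω n)).2⟩
  have hbdd' : IsBoundedUnder (· ≥ ·) atTop fun n => y n ω :=
    isBoundedUnder_of ⟨-B ω, fun n => (abs_le.1 (hA ω hω n)).1⟩
  have hcb : IsCoboundedUnder (· ≤ ·) atTop fun n => y n ω := hbdd'.isCoboundedUnder_le
  have hmem : ∀ k, σ ω k ∈ {n | k ≤ n ∧ b ω - 1 / (k + 1) < y n ω} := by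
    intro k
    have hfreq : ∃ᶠ n in atTop, b ω - 1 / (k + 1) < y n ω := by
      apply frequently_lt_of_lt_limsup hcb
      have : (0:ℝ) < 1 / (k + 1) := by positivity
      linarith [le_refl (b ω)]
    obtain ⟨n, hn, hyn⟩ := (frequently_atTop.1 hfreq) k
    have hne : {n | k ≤ n ∧ b ω - 1 / (k + 1) < y n ω}.Nonempty := ⟨n, hn, hyn⟩
    have hsm := Nat.sInf_mem hne
    have hk : k ≤ sInf {n | k ≤ n ∧ b ω - 1 / (k + 1) < y n ω} := hsm.1
    have heq : σ ω k = sInf {n | k ≤ n ∧ b ω - 1 / (k + 1) < y n ω} := max_eq_right hk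
    rw [heq]; exact hsm
  rw [Metric.tendsto_atTop]
  intro ε hε
  have hev : ∀ᶠ n in atTop, y n ω < b ω + ε / 2 :=
    eventually_lt_of_limsup_lt (by linarith) hbdd
  obtain ⟨N₁, hN₁⟩ := eventually_atTop.1 hev
  obtain ⟨K, hK⟩ := exists_nat_gt (1 / ε)
  refine ⟨max N₁ K, fun k hk => ?_⟩
  have hk1 : N₁ ≤ k := le_trans (le_max_left _ _) hk
  have hk2 : K ≤ k := le_trans (le_max_right _ _) hk
  have h1 : b ω - 1 / (k + 1) < y (σ ω k) ω := (hmem k).2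
  have hσk : N₁ ≤ σ ω k := le_trans hk1 (le_max_left _ _)
  have h2 : y (σ ω k) ω < b ω + ε / 2 := hN₁ _ hσk
  have hKk : (1:ℝ) / ε < (k:ℝ) + 1 := by
    have h3 : (K:ℝ) ≤ k := Nat.cast_le.2 hk2
    linarith
  have hek : 1 / ((k:ℝ) + 1) < ε := by
    rw [div_lt_iff₀ (by positivity)]
    rw [div_lt_iff₀ hε] at hKk
    nlinarith
  rw [Real.dist_eq, abs_lt]
  constructor <;> linarith

/-- Vector version of random subsequence extraction over a finite index type. -/
lemma exists_random_subseq_pi {ι : Type*} [Fintype ι] [DecidableEq ι]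
    {y : ℕ → Ω → ι → ℝ} (hy : ∀ n j, Measurable fun ω => y n ω j)
    {B : Ω → ℝ} (hB : Measurable B) (A : Set Ω)
    (hA : ∀ ω ∈ A, ∀ n j, |y n ω j| ≤ B ω) :
    ∃ σ : Ω → ℕ → ℕ, (∀ k, Measurable fun ω => σ ω k) ∧ (∀ ω k, k ≤ σ ω k) ∧
      ∃ l : Ω → ι → ℝ, (∀ j, Measurable fun ω => l ω j) ∧
        ∀ ω ∈ A, ∀ j, Tendsto (fun k => y (σ ω k) ω j) atTop (𝓝 (l ω j)) := by
  suffices h : ∀ s : Finset ι, ∃ σ : Ω → ℕ → ℕ,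
      (∀ k, Measurable fun ω => σ ω k) ∧ (∀ ω k, k ≤ σ ω k) ∧
      ∃ l : Ω → ι → ℝ, (∀ j, Measurable fun ω => l ω j) ∧
        ∀ ω ∈ A, ∀ j ∈ s, Tendsto (fun k => y (σ ω k) ω j) atTop (𝓝 (l ω j)) by
    obtain ⟨σ, h1, h2, l, h3, h4⟩ := h Finset.univ
    exact ⟨σ, h1, h2, l, h3, fun ω hω j => h4 ω hω j (Finset.mem_univ j)⟩
  intro s
  induction s using Finset.induction_on with
  | empty =>
    exact ⟨fun _ k => k, fun k => measurable_const, fun ω k => le_refl k,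
      fun _ _ => 0, fun j => measurable_const, fun ω hω j hj => absurd hj (by simp)⟩
  | @insert a s ha IH =>
    obtain ⟨σ, hσm, hσle, l, hlm, hlconv⟩ := IH
    -- extract a further subsequence making coordinate `a` converge
    have hy' : ∀ n, Measurable fun ω => y (σ ω n) ω a :=
      fun n => measurable_comp_nat (fun k => hy k a) (hσm n)
    obtain ⟨σ₂, hσ₂m, hσ₂le, l₂, hl₂m, hl₂conv⟩ :=
      exists_random_subseq_real hy' hB A (fun ω hω n => hA ω hω (σ ω n) a)
    refine ⟨fun ω k => σ ω (σ₂ ω k), ?_, ?_, fun ω j => if j = a then l₂ ω else l ω j, ?_, ?_⟩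
    · intro k
      exact measurable_comp_nat (fun n => hσm n) (hσ₂m k)
    · intro ω k
      exact le_trans (hσ₂le ω k) (hσle ω (σ₂ ω k))
    · intro j
      by_cases hj : j = a <;> simp only [hj, if_pos, if_true, if_neg, if_false]
      · exact hl₂m
      · simpa [hj] using hlm j
    · intro ω hω j hj
      have hσ₂top : Tendsto (fun k => σ₂ ω k) atTop atTop :=
        tendsto_atTop_mono (fun k => hσ₂le ω k) tendsto_id
      rcases Finset.mem_insert.1 hj with rfl | hjs
      · simpa using hl₂conv ω hω
      · have hne : j ≠ a := fun h => ha (h ▸ hjs)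
        simpa [hne, Function.comp_def] using (hlconv ω hω j hjs).comp hσ₂top

lemma measurable_finset_inf {ι : Type*} {s : Finset ι} {f : ι → Ω → ℝ≥0∞}
    (hf : ∀ j ∈ s, Measurable (f j)) :
    Measurable fun ω => s.inf fun j => f j ω := by
  classical
  induction s using Finset.induction_on with
  | empty => simpa using measurable_const
  | @insert a s ha IH =>
    simp only [Finset.inf_insert]
    exact (hf a (Finset.mem_insert_self a s)).min
      (IH fun j hj => hf j (Finset.mem_insert_of_mem hj))

lemma measurableSet_infinite {p : ℕ → Ω → Prop} (hp : ∀ n, MeasurableSet {ω | p n ω}) :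
    MeasurableSet {ω | {n | p n ω}.Infinite} := by
  have h : {ω | {n | p n ω}.Infinite} = ⋂ k, ⋃ n, {ω | k ≤ n ∧ p n ω} := by
    ext ω
    simp only [Set.mem_setOf_eq, Set.mem_iInter, Set.mem_iUnion]
    constructor
    · intro h k
      by_contra hc
      push_neg at hc
      apply h
      apply Set.Finite.subset (Set.finite_Iio k)
      intro n hn
      simp only [Set.mem_setOf_eq] at hn
      simp only [Set.mem_Iio]
      by_contra hlt
      push_neg at hlt
      exact hc n hlt hn
    · intro h
      apply Set.infinite_of_not_bddAbove
      rintro ⟨b, hb⟩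
      obtain ⟨n, hn, hpn⟩ := h (b + 1)
      have hnb : n ≤ b := hb hpn
      omega
  rw [h]
  exact MeasurableSet.iInter fun k => MeasurableSet.iUnion fun n =>
    (MeasurableSet.const (k ≤ n)).inter (hp n)

lemma inf_ite_top {ι : Type*} (s : Finset ι) (P : ι → Prop) [DecidablePred P] (f : ι → ℝ≥0∞) :
    (s.inf fun j => if P j then f j else ⊤) = (s.filter P).inf f := by
  apply le_antisymm
  · apply Finset.le_inf
    intro j hj
    rw [Finset.mem_filter] at hj
    have h := Finset.inf_le (f := fun j => if P j then f j else ⊤) hj.1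
    simpa [hj.2] using h
  · apply Finset.le_inf
    intro j hj
    by_cases h : P j
    · simpa [h] using Finset.inf_le (f := f) (Finset.mem_filter.2 ⟨hj, h⟩)
    · simp [h]

/-- Main closedness engine: given the abstract one-step no-arbitrage property for the
vector `V` of price differences, the cone of `G`-measurable nonnegative combinations
dominating a limit is closed. Induction on the set `s` of live coordinates. -/
lemma closure_main {ι : Type*} [Fintype ι] [DecidableEq ι]
    (P : Measure Ω) (G : MeasurableSpace Ω) (hG : G ≤ mΩ)
    (V : Ω → ι → ℝ)
    (hNA : ∀ g : Ω → ι → ℝ, (∀ j, Measurable[G] fun ω => g ω j) → (∀ ω j, 0 ≤ g ω j) →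
      (∀ᵐ ω ∂P, 0 ≤ ∑ j, g ω j * V ω j) → (∀ᵐ ω ∂P, ∑ j, g ω j * V ω j = 0)) :
    ∀ (s : Finset ι) (c : ℕ → Ω → ι → ℝ) (ξ : ℕ → Ω → ℝ) (ζ : Ω → ℝ),
      (∀ n j, Measurable[G] fun ω => c n ω j) →
      (∀ n ω j, 0 ≤ c n ω j) →
      (∀ n ω j, j ∉ s → c n ω j = 0) →
      (∀ᵐ ω ∂P, Tendsto (fun n => ξ n ω) atTop (𝓝 (ζ ω))) →
      (∀ᵐ ω ∂P, ∀ n, ξ n ω ≤ ∑ j, c n ω j * V ω j) →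
      ∃ c' : Ω → ι → ℝ, (∀ j, Measurable[G] fun ω => c' ω j) ∧ (∀ ω j, 0 ≤ c' ω j) ∧
        ∀ᵐ ω ∂P, ζ ω ≤ ∑ j, c' ω j * V ω j := by
  intro s
  induction s using Finset.strongInduction with
  | _ s IH =>
  intro c ξ ζ hcm hcpos hcsupp hconv hle
  classical
  set N : ℕ → Ω → ℝ := fun n ω => ∑ j, c n ω j with hN
  have hNm : ∀ n, Measurable[G] (N n) := fun n => Finset.measurable_sum _ fun j _ => hcm n j
  have hNpos : ∀ n ω, 0 ≤ N n ω := fun n ω => Finset.sum_nonneg fun j _ => hcpos n ω j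
  set L : Ω → ℝ≥0∞ := fun ω => liminf (fun n => ENNReal.ofReal (N n ω)) atTop with hL
  have hLm : Measurable[G] L := Measurable.liminf fun n => (hNm n).ennreal_ofReal
  set Ainf : Set Ω := {ω | L ω = ⊤} with hAinf
  have hAinfm : MeasurableSet[G] Ainf := hLm (measurableSet_singleton ⊤)
  -- Part 1: on the complement of `Ainf` the coefficients have a bounded subsequence
  have part1 : ∃ cfin : Ω → ι → ℝ, (∀ j, Measurable[G] fun ω => cfin ω j) ∧
      (∀ ω j, 0 ≤ cfin ω j) ∧ ∀ᵐ ω ∂P, ω ∉ Ainf → ζ ω ≤ ∑ j, cfin ω j * V ω j := by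
    set τ : Ω → ℕ → ℕ :=
      fun ω k => max k (sInf {n | k ≤ n ∧ ENNReal.ofReal (N n ω) < L ω + 1}) with hτ
    have hτm : ∀ k, Measurable[G] fun ω => τ ω k := by
      intro k
      apply measurable_const.max
      apply measurable_sInf_nat (mΩ := G)
      intro n
      have h1 : MeasurableSet[G] {ω | ENNReal.ofReal (N n ω) < L ω + 1} :=
        measurableSet_lt (hNm n).ennreal_ofReal (hLm.add measurable_const)
      have h2 : MeasurableSet[G] {ω : Ω | k ≤ n} := MeasurableSet.const (k ≤ n)
      exact h2.inter h1
    have hτle : ∀ ω k, k ≤ τ ω k := fun ω k => le_max_left _ _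
    have hτmem : ∀ ω, ω ∉ Ainf → ∀ k,
        τ ω k ∈ {n | k ≤ n ∧ ENNReal.ofReal (N n ω) < L ω + 1} := by
      intro ω hω k
      have hωne : L ω ≠ ⊤ := hω
      have hlt : L ω < L ω + 1 := ENNReal.lt_add_right hωne one_ne_zero
      have hfreq : ∃ᶠ n in atTop, ENNReal.ofReal (N n ω) < L ω + 1 :=
        frequently_lt_of_liminf_lt (by isBoundedDefault) hlt
      obtain ⟨n, hn, h2⟩ := (frequently_atTop.1 hfreq) k
      have hne : {n | k ≤ n ∧ ENNReal.ofReal (N n ω) < L ω + 1}.Nonempty := ⟨n, hn, h2⟩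
      have hmem := Nat.sInf_mem hne
      have heq : τ ω k = sInf {n | k ≤ n ∧ ENNReal.ofReal (N n ω) < L ω + 1} :=
        max_eq_right hmem.1
      rw [heq]; exact hmem
    set B : Ω → ℝ := fun ω => (L ω + 1).toReal with hB
    have hBm : Measurable[G] B := (hLm.add measurable_const).ennreal_toReal
    have hym : ∀ k j, Measurable[G] fun ω => c (τ ω k) ω j := fun k j =>
      measurable_comp_nat (mΩ := G) (fun n => hcm n j) (hτm k)
    have hybd : ∀ ω ∈ {ω | ω ∉ Ainf}, ∀ k j, |c (τ ω k) ω j| ≤ B ω := by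
      intro ω hω k j
      have hmem := hτmem ω hω k
      have hne : L ω + 1 ≠ ⊤ := by
        simp only [Ne, ENNReal.add_eq_top, not_or]
        exact ⟨hω, ENNReal.one_ne_top⟩
      have hNb : N (τ ω k) ω < B ω := by
        have h2 := hmem.2
        rwa [ENNReal.ofReal_lt_iff_lt_toReal (hNpos _ ω) hne] at h2
      have hj : c (τ ω k) ω j ≤ N (τ ω k) ω :=
        Finset.single_le_sum (fun j _ => hcpos _ ω j) (Finset.mem_univ j)
      rw [abs_of_nonneg (hcpos _ ω j)]
      linarith
    obtain ⟨σ, hσm, hσle, l, hlm, hlconv⟩ :=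
      exists_random_subseq_pi (mΩ := G) hym hBm {ω | ω ∉ Ainf} hybd
    refine ⟨fun ω j => max (l ω j) 0, fun j => (hlm j).max measurable_const,
      fun ω j => le_max_right _ _, ?_⟩
    filter_upwards [hconv, hle] with ω hconvω hleω hω
    have hconv2 : ∀ j, Tendsto (fun k => c (τ ω (σ ω k)) ω j) atTop (𝓝 (l ω j)) :=
      fun j => hlconv ω hω j
    have hlpos : ∀ j, 0 ≤ l ω j := fun j =>
      ge_of_tendsto (hconv2 j) (Eventually.of_forall fun k => hcpos _ ω j)
    have hρtop : Tendsto (fun k => τ ω (σ ω k)) atTop atTop :=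
      tendsto_atTop_mono (fun k => le_trans (hσle ω k) (hτle ω (σ ω k))) tendsto_id
    have h1 : Tendsto (fun k => ξ (τ ω (σ ω k)) ω) atTop (𝓝 (ζ ω)) := hconvω.comp hρtop
    have h2 : Tendsto (fun k => ∑ j, c (τ ω (σ ω k)) ω j * V ω j) atTop
        (𝓝 (∑ j, l ω j * V ω j)) :=
      tendsto_finset_sum _ fun j _ => (hconv2 j).mul_const _
    have h3 : ζ ω ≤ ∑ j, l ω j * V ω j :=
      le_of_tendsto_of_tendsto' h1 h2 fun k => hleω _
    have h4 : ∑ j, max (l ω j) 0 * V ω j = ∑ j, l ω j * V ω j :=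
      Finset.sum_congr rfl fun j _ => by rw [max_eq_left (hlpos j)]
    rw [h4]; exact h3
  obtain ⟨cfin, hcfm, hcfpos, hcf⟩ := part1
  -- Part 2: the unbounded part; normalize the coefficients
  set w : ℕ → Ω → ι → ℝ := fun n ω j => c n ω j / (1 + N n ω) with hw
  have hwm : ∀ n j, Measurable[G] fun ω => w n ω j := fun n j =>
    (hcm n j).div (measurable_const.add (hNm n))
  have hwpos : ∀ n ω j, 0 ≤ w n ω j := fun n ω j =>
    div_nonneg (hcpos n ω j) (by linarith [hNpos n ω])
  have hwbd : ∀ ω ∈ (Set.univ : Set Ω), ∀ n j, |w n ω j| ≤ (1 : ℝ) := by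
    intro ω _ n j
    rw [abs_of_nonneg (hwpos n ω j)]
    rw [div_le_one (by linarith [hNpos n ω])]
    have h := Finset.single_le_sum (f := fun j => c n ω j) (fun j _ => hcpos n ω j)
      (Finset.mem_univ j)
    have h2 : N n ω = ∑ j, c n ω j := rfl
    linarith [hNpos n ω, h2 ▸ h]
  obtain ⟨σ₁, hσ₁m, hσ₁le, g, hgm, hgconv'⟩ :=
    exists_random_subseq_pi (mΩ := G) hwm measurable_const Set.univ hwbd
  have hgconv : ∀ ω j, Tendsto (fun k => w (σ₁ ω k) ω j) atTop (𝓝 (g ω j)) :=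
    fun ω j => hgconv' ω (Set.mem_univ ω) j
  have hgpos : ∀ ω j, 0 ≤ g ω j := fun ω j =>
    ge_of_tendsto (hgconv ω j) (Eventually.of_forall fun k => hwpos _ ω j)
  have hgsupp : ∀ ω j, j ∉ s → g ω j = 0 := by
    intro ω j hj
    refine tendsto_nhds_unique (hgconv ω j) ?_
    have heq : (fun k => w (σ₁ ω k) ω j) = fun _ => 0 := by
      funext k; simp [hw, hcsupp _ ω j hj]
    rw [heq]; exact tendsto_const_nhds
  -- on `Ainf` the total mass tends to infinity
  have hNtop : ∀ ω ∈ Ainf, Tendsto (fun n => N n ω) atTop atTop := by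
    intro ω hω
    rw [tendsto_atTop]
    intro M
    have hL' : (⊤ : ℝ≥0∞) ≤ liminf (fun n => ENNReal.ofReal (N n ω)) atTop := le_of_eq hω.symm
    have hy : ENNReal.ofReal M + 1 < ⊤ := by
      simp [lt_top_iff_ne_top, ENNReal.add_eq_top, ENNReal.ofReal_ne_top]
    have hev := (le_liminf_iff (by isBoundedDefault) (by isBoundedDefault)).1 hL'
      (ENNReal.ofReal M + 1) hy
    filter_upwards [hev] with n hn
    by_contra hMN
    push_neg at hMN
    have h1 : ENNReal.ofReal (N n ω) ≤ ENNReal.ofReal M := ENNReal.ofReal_le_ofReal hMN.le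
    exact lt_irrefl _ (lt_of_le_of_lt le_self_add (lt_of_lt_of_le hn h1))
  have hσ₁top : ∀ ω, Tendsto (fun k => σ₁ ω k) atTop atTop :=
    fun ω => tendsto_atTop_mono (fun k => hσ₁le ω k) tendsto_id
  have hNktop : ∀ ω ∈ Ainf, Tendsto (fun k => N (σ₁ ω k) ω) atTop atTop :=
    fun ω hω => (hNtop ω hω).comp (hσ₁top ω)
  have hinv : ∀ ω ∈ Ainf, Tendsto (fun k => (1 + N (σ₁ ω k) ω)⁻¹) atTop (𝓝 0) :=
    fun ω hω => tendsto_inv_atTop_zero.comp (tendsto_atTop_add_const_left atTop 1 (hNktop ω hω))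
  -- the limit direction has total mass one on `Ainf`
  have hsum1 : ∀ ω ∈ Ainf, ∑ j, g ω j = 1 := by
    intro ω hω
    have h1 : Tendsto (fun k => ∑ j, w (σ₁ ω k) ω j) atTop (𝓝 (∑ j, g ω j)) :=
      tendsto_finset_sum _ fun j _ => hgconv ω j
    have h2 : Tendsto (fun k => ∑ j, w (σ₁ ω k) ω j) atTop (𝓝 1) := by
      have heq : ∀ k, ∑ j, w (σ₁ ω k) ω j = 1 - (1 + N (σ₁ ω k) ω)⁻¹ := by
        intro k
        have hpos : (0 : ℝ) < 1 + N (σ₁ ω k) ω := by linarith [hNpos (σ₁ ω k) ω]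
        have hNdef : N (σ₁ ω k) ω = ∑ j, c (σ₁ ω k) ω j := rfl
        rw [show (∑ j, w (σ₁ ω k) ω j) = (∑ j, c (σ₁ ω k) ω j) / (1 + N (σ₁ ω k) ω) from
          (Finset.sum_div _ _ _).symm, ← hNdef]
        field_simp
        ring
      have h3 : Tendsto (fun k => 1 - (1 + N (σ₁ ω k) ω)⁻¹) atTop (𝓝 (1 - 0)) :=
        tendsto_const_nhds.sub (hinv ω hω)
      rw [sub_zero] at h3
      exact h3.congr fun k => (heq k).symm
    exact tendsto_nhds_unique h1 h2
  -- by no-arbitrage, the limit direction has zero payoff on `Ainf`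
  have hNA0 : ∀ᵐ ω ∂P, ω ∈ Ainf → ∑ j, g ω j * V ω j = 0 := by
    set gi : Ω → ι → ℝ := fun ω j => if ω ∈ Ainf then g ω j else 0 with hgi
    have h1 : ∀ j, Measurable[G] fun ω => gi ω j := fun j =>
      Measurable.ite hAinfm (hgm j) measurable_const
    have h2 : ∀ ω j, 0 ≤ gi ω j := fun ω j => by
      by_cases h : ω ∈ Ainf <;> simp [hgi, h, hgpos ω j]
    have h3 : ∀ᵐ ω ∂P, 0 ≤ ∑ j, gi ω j * V ω j := by
      filter_upwards [hconv, hle] with ω hconvω hleω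
      by_cases h : ω ∈ Ainf
      · have hsimp : ∀ j, gi ω j = g ω j := fun j => if_pos h
        have hpay : Tendsto (fun k => ∑ j, w (σ₁ ω k) ω j * V ω j) atTop
            (𝓝 (∑ j, g ω j * V ω j)) :=
          tendsto_finset_sum _ fun j _ => (hgconv ω j).mul_const _
        have hxi : Tendsto (fun k => ξ (σ₁ ω k) ω * (1 + N (σ₁ ω k) ω)⁻¹) atTop
            (𝓝 (ζ ω * 0)) := (hconvω.comp (hσ₁top ω)).mul (hinv ω h)
        rw [mul_zero] at hxi
        have hineq : ∀ k, ξ (σ₁ ω k) ω * (1 + N (σ₁ ω k) ω)⁻¹ ≤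
            ∑ j, w (σ₁ ω k) ω j * V ω j := by
          intro k
          have hpos : (0 : ℝ) < 1 + N (σ₁ ω k) ω := by linarith [hNpos (σ₁ ω k) ω]
          have hmul := mul_le_mul_of_nonneg_right (hleω (σ₁ ω k))
            (inv_nonneg.2 hpos.le)
          have heq : (∑ j, c (σ₁ ω k) ω j * V ω j) * (1 + N (σ₁ ω k) ω)⁻¹ =
              ∑ j, w (σ₁ ω k) ω j * V ω j := by
            rw [Finset.sum_mul]
            refine Finset.sum_congr rfl fun j _ => ?_
            rw [hw]
            simp only [div_eq_mul_inv]
            ring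
          rw [heq] at hmul
          exact hmul
        have hres : (0:ℝ) ≤ ∑ j, g ω j * V ω j := le_of_tendsto_of_tendsto' hxi hpay hineq
        calc (0:ℝ) ≤ ∑ j, g ω j * V ω j := hres
          _ = ∑ j, gi ω j * V ω j := by
            exact (Finset.sum_congr rfl fun j _ => by rw [hsimp j]).symm
      · have hsimp : ∀ j, gi ω j = 0 := fun j => if_neg h
        rw [Finset.sum_congr rfl fun j (_ : j ∈ Finset.univ) => by rw [hsimp j, zero_mul]]
        simp
    have h4 := hNA gi h1 h2 h3
    filter_upwards [h4] with ω h4ω h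
    have hsimp : ∀ j, gi ω j = g ω j := fun j => if_pos h
    calc ∑ j, g ω j * V ω j = ∑ j, gi ω j * V ω j :=
          (Finset.sum_congr rfl fun j _ => by rw [hsimp j]).symm
      _ = 0 := h4ω
  -- eliminate along the direction `g`
  set lam : ℕ → Ω → ℝ := fun n ω =>
    (s.inf fun j => if 0 < g ω j then ENNReal.ofReal (c n ω j / g ω j) else ⊤).toReal with hlam
  have hlamm : ∀ n, Measurable[G] (lam n) := by
    intro n
    apply Measurable.ennreal_toReal
    apply measurable_finset_inf (mΩ := G)
    intro j _
    exact Measurable.ite (measurableSet_lt measurable_const (hgm j))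
      ((hcm n j).div (hgm j)).ennreal_ofReal measurable_const
  have hlampos : ∀ n ω, 0 ≤ lam n ω := fun n ω => ENNReal.toReal_nonneg
  have hinf_eq : ∀ n ω, (s.inf fun j => if 0 < g ω j then ENNReal.ofReal (c n ω j / g ω j)
      else ⊤) = (s.filter fun j => 0 < g ω j).inf
        fun j => ENNReal.ofReal (c n ω j / g ω j) := fun n ω => inf_ite_top _ _ _
  have hJne : ∀ ω ∈ Ainf, (s.filter fun j => 0 < g ω j).Nonempty := by
    intro ω hω
    by_contra hc
    rw [Finset.not_nonempty_iff_eq_empty, Finset.filter_eq_empty_iff] at hc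
    have hzero : ∑ j, g ω j = 0 := Finset.sum_eq_zero fun j _ => by
      by_cases hj : j ∈ s
      · have h2 := hc hj
        push_neg at h2
        exact le_antisymm h2 (hgpos ω j)
      · exact hgsupp ω j hj
    rw [hsum1 ω hω] at hzero
    norm_num at hzero
  have hlam_le : ∀ n ω, ω ∈ Ainf → ∀ j ∈ s, 0 < g ω j → lam n ω ≤ c n ω j / g ω j := by
    intro n ω hω j hjs hgj
    have hle1 : (s.inf fun j => if 0 < g ω j then ENNReal.ofReal (c n ω j / g ω j) else ⊤) ≤
        ENNReal.ofReal (c n ω j / g ω j) := by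
      rw [hinf_eq]
      exact Finset.inf_le (Finset.mem_filter.2 ⟨hjs, hgj⟩)
    calc lam n ω ≤ (ENNReal.ofReal (c n ω j / g ω j)).toReal :=
          ENNReal.toReal_mono ENNReal.ofReal_ne_top hle1
      _ = c n ω j / g ω j := ENNReal.toReal_ofReal (div_nonneg (hcpos n ω j) (hgpos ω j))
  set ctil : ℕ → Ω → ι → ℝ := fun n ω =>
    if ω ∈ Ainf then (fun j => c n ω j - lam n ω * g ω j) else c n ω with hctil
  have hctilm : ∀ n j, Measurable[G] fun ω => ctil n ω j := by
    intro n j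
    have heq : (fun ω => ctil n ω j) =
        fun ω => if ω ∈ Ainf then c n ω j - lam n ω * g ω j else c n ω j := by
      funext ω; by_cases h : ω ∈ Ainf <;> simp [hctil, h]
    rw [heq]
    exact Measurable.ite hAinfm ((hcm n j).sub ((hlamm n).mul (hgm j))) (hcm n j)
  have hctilpos : ∀ n ω j, 0 ≤ ctil n ω j := by
    intro n ω j
    by_cases h : ω ∈ Ainf
    · simp only [hctil, if_pos h]
      by_cases hgj : 0 < g ω j
      · have hjs : j ∈ s := by
          by_contra hj
          rw [hgsupp ω j hj] at hgj
          exact lt_irrefl 0 hgj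
        have h1 := hlam_le n ω h j hjs hgj
        have h2 : lam n ω * g ω j ≤ (c n ω j / g ω j) * g ω j :=
          mul_le_mul_of_nonneg_right h1 (hgpos ω j)
        rw [div_mul_cancel₀ _ (ne_of_gt hgj)] at h2
        linarith
      · have hgj0 : g ω j = 0 := le_antisymm (not_lt.1 hgj) (hgpos ω j)
        rw [hgj0, mul_zero, sub_zero]
        exact hcpos n ω j
    · simp only [hctil, if_neg h]
      exact hcpos n ω j
  have hctilsupp : ∀ n ω j, j ∉ s → ctil n ω j = 0 := by
    intro n ω j hj
    by_cases h : ω ∈ Ainf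
    · simp [hctil, h, hcsupp n ω j hj, hgsupp ω j hj]
    · simp [hctil, h, hcsupp n ω j hj]
  have hctilzero : ∀ n ω, ω ∈ Ainf → ∃ j ∈ s, ctil n ω j = 0 := by
    intro n ω hω
    obtain ⟨j₀, hj₀mem, hj₀eq⟩ := Finset.exists_mem_eq_inf _ (hJne ω hω)
      fun j => ENNReal.ofReal (c n ω j / g ω j)
    rw [Finset.mem_filter] at hj₀mem
    refine ⟨j₀, hj₀mem.1, ?_⟩
    have hlameq : lam n ω = c n ω j₀ / g ω j₀ := by
      rw [hlam]
      simp only [hinf_eq n ω, hj₀eq]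
      exact ENNReal.toReal_ofReal (div_nonneg (hcpos n ω j₀) (hgpos ω j₀))
    simp only [hctil, if_pos hω]
    rw [hlameq, div_mul_cancel₀ _ (ne_of_gt hj₀mem.2)]
    ring
  have hctilpay : ∀ n ω, ω ∈ Ainf → ∑ j, ctil n ω j * V ω j =
      (∑ j, c n ω j * V ω j) - lam n ω * ∑ j, g ω j * V ω j := by
    intro n ω hω
    simp only [hctil, if_pos hω]
    rw [Finset.mul_sum, ← Finset.sum_sub_distrib]
    exact Finset.sum_congr rfl fun j _ => by ring
  have hle2 : ∀ᵐ ω ∂P, ∀ n, ξ n ω ≤ ∑ j, ctil n ω j * V ω j := by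
    filter_upwards [hle, hNA0] with ω hleω h0 n
    by_cases h : ω ∈ Ainf
    · rw [hctilpay n ω h, h0 h, mul_zero, sub_zero]
      exact hleω n
    · have heq : ∀ j, ctil n ω j = c n ω j := fun j => by simp [hctil, if_neg h]
      calc ξ n ω ≤ ∑ j, c n ω j * V ω j := hleω n
        _ = ∑ j, ctil n ω j * V ω j :=
          (Finset.sum_congr rfl fun j _ => by rw [heq j]).symm
  -- pigeonhole: on `Ainf`, some coordinate vanishes infinitely often
  set Q : ι → Set Ω := fun j => {ω | {n | ctil n ω j = 0}.Infinite} with hQdef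
  have hQm : ∀ j, MeasurableSet[G] (Q j) := fun j =>
    measurableSet_infinite (mΩ := G) fun n => (hctilm n j) (measurableSet_singleton 0)
  have hcover : ∀ ω ∈ Ainf, ∃ j ∈ s, ω ∈ Q j := by
    intro ω hω
    by_contra hc
    push_neg at hc
    have hfin : (⋃ j ∈ s, {n | ctil n ω j = 0}).Finite :=
      Set.Finite.biUnion s.finite_toSet fun j hj => Set.not_infinite.1 (hc j hj)
    have hsub : (Set.univ : Set ℕ) ⊆ ⋃ j ∈ s, {n | ctil n ω j = 0} := by
      intro n _
      obtain ⟨j, hjs, hj0⟩ := hctilzero n ω hω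
      exact Set.mem_biUnion hjs hj0
    exact Set.infinite_univ (hfin.subset hsub)
  -- a measurable partition of `Ainf` according to the minimal-rank vanishing coordinate
  set rk : ι → ℕ := fun j => (Fintype.equivFin ι j : ℕ) with hrk
  have hrkinj : Function.Injective rk := fun a b hab =>
    (Fintype.equivFin ι).injective (Fin.val_injective hab)
  set A : ι → Set Ω := fun j => if j ∈ s then
      (Ainf ∩ Q j) \ ⋃ j' ∈ s.filter fun j' => rk j' < rk j, Q j'
    else ∅ with hA
  have hAm : ∀ j, MeasurableSet[G] (A j) := by
    intro j
    simp only [hA]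
    by_cases h : j ∈ s
    · rw [if_pos h]
      exact ((hAinfm.inter (hQm j)).diff
        (Finset.measurableSet_biUnion _ fun j' _ => hQm j'))
    · rw [if_neg h]; exact MeasurableSet.empty
  have hAsub : ∀ j, A j ⊆ Ainf := by
    intro j ω hω
    simp only [hA] at hω
    by_cases h : j ∈ s
    · rw [if_pos h] at hω; exact hω.1.1
    · rw [if_neg h] at hω; exact absurd hω (Set.notMem_empty ω)
  have hAQ : ∀ j, A j ⊆ Q j := by
    intro j ω hω
    simp only [hA] at hω
    by_cases h : j ∈ s
    · rw [if_pos h] at hω; exact hω.1.2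
    · rw [if_neg h] at hω; exact absurd hω (Set.notMem_empty ω)
  have hdisj : ∀ ω j j', ω ∈ A j → ω ∈ A j' → j = j' := by
    intro ω j j' hj hj'
    by_contra hne
    have hjs : j ∈ s := by
      by_contra h; simp only [hA, if_neg h] at hj; exact hj
    have hj's : j' ∈ s := by
      by_contra h; simp only [hA, if_neg h] at hj'
      exact hj'
    have hQj : ω ∈ Q j := hAQ j hj
    have hQj' : ω ∈ Q j' := hAQ j' hj'
    have hrkne : rk j ≠ rk j' := fun h => hne (hrkinj h)
    rcases lt_or_gt_of_ne hrkne with h | h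
    · simp only [hA, if_pos hj's] at hj'
      exact hj'.2 (Set.mem_biUnion (Finset.mem_filter.2 ⟨hjs, h⟩) hQj)
    · simp only [hA, if_pos hjs] at hj
      exact hj.2 (Set.mem_biUnion (Finset.mem_filter.2 ⟨hj's, h⟩) hQj')
  have hAcover : ∀ ω ∈ Ainf, ∃ j, ω ∈ A j := by
    intro ω hω
    have hne : (s.filter fun j => ω ∈ Q j).Nonempty := by
      obtain ⟨j, hjs, hjQ⟩ := hcover ω hω
      exact ⟨j, Finset.mem_filter.2 ⟨hjs, hjQ⟩⟩
    obtain ⟨j, hjmem, hjmin⟩ := Finset.exists_min_image _ rk hne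
    rw [Finset.mem_filter] at hjmem
    refine ⟨j, ?_⟩
    simp only [hA, if_pos hjmem.1]
    refine ⟨⟨hω, hjmem.2⟩, ?_⟩
    intro hmem
    rw [Set.mem_iUnion₂] at hmem
    obtain ⟨j', hj', hQj'⟩ := hmem
    rw [Finset.mem_filter] at hj'
    have hge := hjmin j' (Finset.mem_filter.2 ⟨hj'.1, hQj'⟩)
    omega
  -- recursive step on each piece of the partition
  have key : ∀ j : ι, ∃ cj : Ω → ι → ℝ, (∀ i, Measurable[G] fun ω => cj ω i) ∧
      (∀ ω i, 0 ≤ cj ω i) ∧ ∀ᵐ ω ∂P, ω ∈ A j → ζ ω ≤ ∑ i, cj ω i * V ω i := by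
    intro j
    by_cases hjs : j ∈ s
    swap
    · refine ⟨0, fun i => measurable_const, fun ω i => le_refl 0, ?_⟩
      filter_upwards with ω h
      simp only [hA, if_neg hjs] at h
      exact absurd h (Set.notMem_empty ω)
    set ρ : Ω → ℕ → ℕ := fun ω k => max k (sInf {n | k ≤ n ∧ ctil n ω j = 0}) with hρ
    have hρm : ∀ k, Measurable[G] fun ω => ρ ω k := fun k =>
      measurable_const.max (measurable_sInf_nat (mΩ := G) fun n =>
        (MeasurableSet.const (k ≤ n)).inter ((hctilm n j) (measurableSet_singleton 0)))
    have hρle : ∀ ω k, k ≤ ρ ω k := fun ω k => le_max_left _ _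
    have hρmem : ∀ ω, ω ∈ Q j → ∀ k, ρ ω k ∈ {n | k ≤ n ∧ ctil n ω j = 0} := by
      intro ω hQω k
      have hinf : {n | ctil n ω j = 0}.Infinite := hQω
      obtain ⟨n, hn1, hn2⟩ : ∃ n, k ≤ n ∧ ctil n ω j = 0 := by
        by_contra hcon
        push_neg at hcon
        refine hinf (Set.Finite.subset (Set.finite_Iio k) fun n hn => ?_)
        simp only [Set.mem_Iio]
        by_contra hlt
        push_neg at hlt
        exact hcon n hlt hn
      have hne : {n | k ≤ n ∧ ctil n ω j = 0}.Nonempty := ⟨n, hn1, hn2⟩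
      have hmem := Nat.sInf_mem hne
      have heq : ρ ω k = sInf {n | k ≤ n ∧ ctil n ω j = 0} := max_eq_right hmem.1
      rw [heq]; exact hmem
    set cc : ℕ → Ω → ι → ℝ := fun k ω =>
      if ω ∈ A j then (fun i => ctil (ρ ω k) ω i) else 0 with hcc
    have hccm : ∀ k i, Measurable[G] fun ω => cc k ω i := by
      intro k i
      have heq : (fun ω => cc k ω i) =
          fun ω => if ω ∈ A j then ctil (ρ ω k) ω i else 0 := by
        funext ω; by_cases h : ω ∈ A j <;> simp [hcc, h]
      rw [heq]
      exact Measurable.ite (hAm j)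
        (measurable_comp_nat (mΩ := G) (fun n => hctilm n i) (hρm k)) measurable_const
    have hccpos : ∀ k ω i, 0 ≤ cc k ω i := by
      intro k ω i
      by_cases h : ω ∈ A j <;> simp [hcc, h, hctilpos]
    have hccsupp : ∀ k ω i, i ∉ s.erase j → cc k ω i = 0 := by
      intro k ω i hi
      by_cases h : ω ∈ A j
      · simp only [hcc, if_pos h]
        by_cases hij : i = j
        · rw [hij]
          exact (hρmem ω (hAQ j h) k).2
        · have his : i ∉ s := fun his => hi (Finset.mem_erase.2 ⟨hij, his⟩)
          exact hctilsupp _ ω i his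
      · simp [hcc, h]
    set ξj : ℕ → Ω → ℝ := fun k ω => if ω ∈ A j then ξ (ρ ω k) ω else 0 with hξj
    set ζj : Ω → ℝ := fun ω => if ω ∈ A j then ζ ω else 0 with hζj
    have hρtop : ∀ ω, Tendsto (fun k => ρ ω k) atTop atTop :=
      fun ω => tendsto_atTop_mono (fun k => hρle ω k) tendsto_id
    have hconvj : ∀ᵐ ω ∂P, Tendsto (fun k => ξj k ω) atTop (𝓝 (ζj ω)) := by
      filter_upwards [hconv] with ω hconvω
      by_cases h : ω ∈ A j
      · simp only [hξj, hζj, if_pos h]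
        exact hconvω.comp (hρtop ω)
      · simp only [hξj, hζj, if_neg h]
        exact tendsto_const_nhds
    have hlej : ∀ᵐ ω ∂P, ∀ k, ξj k ω ≤ ∑ i, cc k ω i * V ω i := by
      filter_upwards [hle2] with ω hleω k
      by_cases h : ω ∈ A j
      · simp only [hξj, hcc, if_pos h]
        exact hleω (ρ ω k)
      · simp only [hξj, hcc, if_neg h]
        simp
    obtain ⟨c', h1, h2, h3⟩ := IH (s.erase j) (Finset.erase_ssubset hjs) cc ξj ζj
      hccm hccpos (fun k ω i hi => hccsupp k ω i hi) hconvj hlej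
    refine ⟨c', h1, h2, ?_⟩
    filter_upwards [h3] with ω h3ω hAω
    have heq : ζj ω = ζ ω := if_pos hAω
    rw [← heq]
    exact h3ω
  choose cJ hcJm hcJpos hcJae using key
  refine ⟨fun ω i => Ainfᶜ.indicator (fun ω => cfin ω i) ω +
      ∑ j, (A j).indicator (fun ω => cJ j ω i) ω, ?_, ?_, ?_⟩
  · intro i
    refine Measurable.add (Measurable.indicator (hcfm i) hAinfm.compl)
      (Finset.measurable_sum _ fun j _ => Measurable.indicator (hcJm j i) (hAm j))
  · intro ω i
    exact add_nonneg (Set.indicator_nonneg (fun ω _ => hcfpos ω i) ω)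
      (Finset.sum_nonneg fun j _ => Set.indicator_nonneg (fun ω _ => hcJpos j ω i) ω)
  · have hall : ∀ᵐ ω ∂P, ∀ j, ω ∈ A j → ζ ω ≤ ∑ i, cJ j ω i * V ω i :=
      (ae_all_iff).2 hcJae
    filter_upwards [hcf, hall] with ω hfin hAs
    by_cases h : ω ∈ Ainf
    · obtain ⟨j₀, hj₀⟩ := hAcover ω h
      have hval : ∀ i, Ainfᶜ.indicator (fun ω => cfin ω i) ω +
          ∑ j, (A j).indicator (fun ω => cJ j ω i) ω = cJ j₀ ω i := by
        intro i
        rw [Set.indicator_of_notMem (by simpa using h)]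
        rw [Finset.sum_eq_single j₀]
        · rw [Set.indicator_of_mem hj₀, zero_add]
        · intro j _ hne
          exact Set.indicator_of_notMem (fun hmem => hne (hdisj ω j j₀ hmem hj₀)) _
        · intro habs
          exact absurd (Finset.mem_univ j₀) habs
      calc ζ ω ≤ ∑ i, cJ j₀ ω i * V ω i := hAs j₀ hj₀
        _ = ∑ i, (Ainfᶜ.indicator (fun ω => cfin ω i) ω +
            ∑ j, (A j).indicator (fun ω => cJ j ω i) ω) * V ω i :=
          (Finset.sum_congr rfl fun i _ => by rw [hval i]).symm
    · have hval : ∀ i, Ainfᶜ.indicator (fun ω => cfin ω i) ω +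
          ∑ j, (A j).indicator (fun ω => cJ j ω i) ω = cfin ω i := by
        intro i
        rw [Set.indicator_of_mem (by simpa using h)]
        rw [Finset.sum_eq_zero fun j _ =>
          Set.indicator_of_notMem (fun hmem => h (hAsub j hmem)) _, add_zero]
      calc ζ ω ≤ ∑ i, cfin ω i * V ω i := hfin h
        _ = ∑ i, (Ainfᶜ.indicator (fun ω => cfin ω i) ω +
            ∑ j, (A j).indicator (fun ω => cJ j ω i) ω) * V ω i :=
          (Finset.sum_congr rfl fun i _ => by rw [hval i]).symm

end Helpers

end BidAskFTAP
open BidAskFTAP in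
/-- (Fundamental theorem, (c) ⇒ (d)) Fix `1 ≤ t ≤ t+k ≤ T`. If
`F_{t-1,t+k} ∩ L⁰₊(𝓕_{t+k}) = {0}`, then `F_{t-1,t+k}` is closed under convergence in
probability. -/
theorem stmt9 {Ω : Type*} [m : MeasurableSpace Ω] {d T : ℕ}
    (P : MeasureTheory.Measure Ω) [MeasureTheory.IsProbabilityMeasure P]
    (hcomp : P.IsComplete)
    (F : ℕ → MeasurableSpace Ω) (hF : IsFiltration F T)
    (Sb Sa : ℕ → Ω → Fin d → ℝ) (hBA : IsBidAsk P F T Sb Sa)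
    (t k : ℕ) (ht : 1 ≤ t) (htk : t + k ≤ T)
    (hNA : ∀ f : Ω → ℝ, memFtk P F Sb Sa t k f → (∀ᵐ ω ∂P, 0 ≤ f ω) → f =ᵐ[P] 0) :
    ∀ (ξ : ℕ → Ω → ℝ) (ζ : Ω → ℝ),
      (∀ n, memFtk P F Sb Sa t k (ξ n)) →
      MeasureTheory.TendstoInMeasure P ξ Filter.atTop ζ →
      memFtk P F Sb Sa t k ζ := by
  classical
  intro ξ ζ hmem htim
  obtain ⟨hSbAd, hSaAd, hSbpos, hSapos, hba⟩ := hBA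
  have hG : F (t - 1) ≤ m := hF.2.1 _
  have hGH : F (t - 1) ≤ F (t + k) := hF.1 (by omega)
  choose Hp Hm r hHpm hHmm hHppos hHmpos hrm hrpos heq using hmem
  set V : Ω → (Fin d ⊕ Fin d) → ℝ := fun ω => Sum.elim (Sb (t + k) ω - Sa (t - 1) ω)
    (fun i => -((Sa (t + k) ω - Sb (t - 1) ω) i)) with hV
  set c : ℕ → Ω → (Fin d ⊕ Fin d) → ℝ := fun n ω => Sum.elim (Hp n ω) (Hm n ω) with hc
  have hcm : ∀ n j, Measurable[F (t - 1)] fun ω => c n ω j := by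
    intro n j
    cases j with
    | inl i => exact (measurable_pi_apply i).comp (hHpm n)
    | inr i => exact (measurable_pi_apply i).comp (hHmm n)
  have hcpos : ∀ n ω j, 0 ≤ c n ω j := by
    intro n ω j
    cases j with
    | inl i => exact hHppos n ω i
    | inr i => exact hHmpos n ω i
  have hpayoff : ∀ (cv : Ω → (Fin d ⊕ Fin d) → ℝ) (ω : Ω),
      dotp (fun i => cv ω (Sum.inl i)) (Sb (t + k) ω - Sa (t - 1) ω) -
        dotp (fun i => cv ω (Sum.inr i)) (Sa (t + k) ω - Sb (t - 1) ω) =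
        ∑ j, cv ω j * V ω j := by
    intro cv ω
    rw [hV, Fintype.sum_sum_type]
    simp only [Sum.elim_inl, Sum.elim_inr, dotp, Pi.sub_apply, mul_neg]
    rw [Finset.sum_neg_distrib]
    ring
  have hcpay : ∀ n ω, dotp (Hp n ω) (Sb (t + k) ω - Sa (t - 1) ω) -
      dotp (Hm n ω) (Sa (t + k) ω - Sb (t - 1) ω) = ∑ j, c n ω j * V ω j := by
    intro n ω
    have h := hpayoff (c n) ω
    simpa [hc] using h
  have hNA' : ∀ g : Ω → (Fin d ⊕ Fin d) → ℝ, (∀ j, Measurable[F (t - 1)] fun ω => g ω j) →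
      (∀ ω j, 0 ≤ g ω j) → (∀ᵐ ω ∂P, 0 ≤ ∑ j, g ω j * V ω j) →
      (∀ᵐ ω ∂P, ∑ j, g ω j * V ω j = 0) := by
    intro g hgm hgpos hgae
    have hmemf : memFtk P F Sb Sa t k fun ω => ∑ j, g ω j * V ω j := by
      refine ⟨fun ω => fun i => g ω (Sum.inl i), fun ω => fun i => g ω (Sum.inr i), 0,
        measurable_pi_fun (mΩ := F (t - 1)) fun i => hgm (Sum.inl i),
        measurable_pi_fun (mΩ := F (t - 1)) fun i => hgm (Sum.inr i),
        fun ω i => hgpos ω _, fun ω i => hgpos ω _,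
        measurable_const, Filter.Eventually.of_forall fun ω => le_refl 0, ?_⟩
      refine Filter.Eventually.of_forall fun ω => ?_
      simp only [Pi.zero_apply, sub_zero]
      exact (hpayoff g ω).symm
    have h0 := hNA _ hmemf hgae
    filter_upwards [h0] with ω hω
    exact hω
  obtain ⟨ns, hnsmono, htend⟩ := htim.exists_seq_tendsto_ae
  have hle : ∀ᵐ ω ∂P, ∀ n, ξ (ns n) ω ≤ ∑ j, c (ns n) ω j * V ω j := by
    rw [MeasureTheory.ae_all_iff]
    intro n
    filter_upwards [heq (ns n), hrpos (ns n)] with ω h1 h2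
    rw [h1, ← hcpay (ns n) ω]
    linarith
  obtain ⟨c', hc'm, hc'pos, hc'ae⟩ := closure_main P (F (t - 1)) hG V hNA' Finset.univ
    (fun n => c (ns n)) (fun n => ξ (ns n)) ζ (fun n j => hcm (ns n) j)
    (fun n ω j => hcpos (ns n) ω j) (fun n ω j hj => absurd (Finset.mem_univ j) hj)
    htend hle
  set ψ : ℕ → Ω → ℝ := fun n ω => dotp (Hp (ns n) ω) (Sb (t + k) ω - Sa (t - 1) ω) -
    dotp (Hm (ns n) ω) (Sa (t + k) ω - Sb (t - 1) ω) - r (ns n) ω with hψ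
  have hSbH : ∀ i, Measurable[F (t + k)] fun ω => Sb (t + k) ω i :=
    fun i => (measurable_pi_apply i).comp (hSbAd (t + k) htk)
  have hSaH : ∀ i, Measurable[F (t + k)] fun ω => Sa (t + k) ω i :=
    fun i => (measurable_pi_apply i).comp (hSaAd (t + k) htk)
  have hSbH' : ∀ i, Measurable[F (t + k)] fun ω => Sb (t - 1) ω i :=
    fun i => ((measurable_pi_apply i).comp (hSbAd (t - 1) (by omega))).mono hGH le_rfl
  have hSaH' : ∀ i, Measurable[F (t + k)] fun ω => Sa (t - 1) ω i :=
    fun i => ((measurable_pi_apply i).comp (hSaAd (t - 1) (by omega))).mono hGH le_rfl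
  have hψm : ∀ n, Measurable[F (t + k)] (ψ n) := by
    intro n
    have h1 : Measurable[F (t + k)] fun ω =>
        dotp (Hp (ns n) ω) (Sb (t + k) ω - Sa (t - 1) ω) := by
      simp only [dotp, Pi.sub_apply]
      exact Finset.measurable_sum _ fun i _ =>
        (((measurable_pi_apply i).comp (hHpm (ns n))).mono hGH le_rfl).mul
          ((hSbH i).sub (hSaH' i))
    have h2 : Measurable[F (t + k)] fun ω =>
        dotp (Hm (ns n) ω) (Sa (t + k) ω - Sb (t - 1) ω) := by
      simp only [dotp, Pi.sub_apply]
      exact Finset.measurable_sum _ fun i _ =>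
        (((measurable_pi_apply i).comp (hHmm (ns n))).mono hGH le_rfl).mul
          ((hSaH i).sub (hSbH' i))
    exact (h1.sub h2).sub (hrm (ns n))
  obtain ⟨ζ', hζ'm, hζ'lim⟩ := exists_measurable_limit (mΩ := F (t + k)) hψm
  have hζeq : ζ =ᵐ[P] ζ' := by
    have hae2 : ∀ᵐ ω ∂P, ∀ n, ξ (ns n) ω = ψ n ω := MeasureTheory.ae_all_iff.2 fun n => heq (ns n)
    filter_upwards [hae2, htend] with ω h1 h2
    have h3 : Filter.Tendsto (fun n => ψ n ω) Filter.atTop (nhds (ζ ω)) := h2.congr h1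
    exact tendsto_nhds_unique h3 (hζ'lim ω ⟨ζ ω, h3⟩)
  refine ⟨fun ω i => c' ω (Sum.inl i), fun ω i => c' ω (Sum.inr i),
    fun ω => (∑ j, c' ω j * V ω j) - ζ' ω,
    measurable_pi_fun (mΩ := F (t - 1)) (fun i => hc'm (Sum.inl i)),
    measurable_pi_fun (mΩ := F (t - 1)) (fun i => hc'm (Sum.inr i)),
    fun ω i => hc'pos ω _, fun ω i => hc'pos ω _, ?_, ?_, ?_⟩
  · refine Measurable.sub ?_ hζ'm
    refine Finset.measurable_sum _ fun j _ => Measurable.mul ((hc'm j).mono hGH le_rfl) ?_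
    cases j with
    | inl i => exact (hSbH i).sub (hSaH' i)
    | inr i => exact ((hSaH i).sub (hSbH' i)).neg
  · filter_upwards [hc'ae, hζeq] with ω h1 h2
    rw [← h2]
    linarith
  · filter_upwards [hζeq] with ω h2
    have h := hpayoff c' ω
    rw [h]
    linarith
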